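/- For a single hour, suppose c is C^2 with c' > 0 on the relevant domain, and at the point (ℓ_1,…,ℓ_N) with ℓ = ∑_n ℓ_n > 0 the condition (ℓ)^2 / (∑_n ℓ_n^2) > ( ℓ c''(ℓ) / (2 c'(ℓ)) )^2 holds. Then the N×N matrix M with entries M_{nn} = 2c'(ℓ) + ℓ_n c''(ℓ) and M_{nm} = c'(ℓ) + (1/2)(ℓ_n + ℓ_m) c''(ℓ) for n ≠ m (the symmetrized Jacobian of the pseudo-gradient map g_n(ℓ_1,…,ℓ_N) = c(ℓ) + ℓ_n c'(ℓ)) is positive definite. -/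

import Mathlib

open Finset Matrix

/-- Under the Rosen-type condition
`ℓ² / ∑ ℓₙ² > (ℓ c''(ℓ) / (2 c'(ℓ)))²` with `c' (ℓ) > 0`, the symmetrized Jacobian
of the pseudo-gradient map of the single-hour hourly proportional game is positive
definite. -/
theorem hp_symmetrized_jacobian_posdef
    {N : Type*} [Fintype N] [DecidableEq N]
    (c : ℝ → ℝ) (ℓ : N → ℝ) (hℓ : ∀ n, 0 ≤ ℓ n)
    (L : ℝ) (hL : L = ∑ n, ℓ n) (hLpos : 0 < L)
    (hc2 : ContDiffAt ℝ 2 c L)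
    (hc' : 0 < deriv c L)
    (hcond : (L * deriv (deriv c) L / (2 * deriv c L)) ^ 2
        < L ^ 2 / ∑ n, (ℓ n) ^ 2)
    (M : Matrix N N ℝ)
    (hM : ∀ n m, M n m = if n = m then 2 * deriv c L + ℓ n * deriv (deriv c) L
      else deriv c L + (ℓ n + ℓ m) / 2 * deriv (deriv c) L) :
    M.PosDef := by
  set a := deriv c L with ha
  set b := deriv (deriv c) L with hb
  set T := ∑ n, (ℓ n) ^ 2 with hT
  -- T > 0
  have hTpos : 0 < T := by
    rcases le_or_gt T 0 with h | h
    · exfalso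
      have hT0 : T = 0 := le_antisymm h (Finset.sum_nonneg fun n _ => sq_nonneg _)
      have : ∀ n ∈ Finset.univ, ℓ n = 0 := by
        intro n _
        have := (Finset.sum_eq_zero_iff_of_nonneg
          (fun n _ => sq_nonneg (ℓ n))).mp hT0 n (Finset.mem_univ n)
        exact pow_eq_zero_iff (by norm_num) |>.mp this
      have : L = 0 := by rw [hL]; exact Finset.sum_eq_zero this
      linarith
    · exact h
  -- b² T < 4 a²
  have hkey : b ^ 2 * T < 4 * a ^ 2 := by
    have h1 : (L * b / (2 * a)) ^ 2 = L ^ 2 * b ^ 2 / (4 * a ^ 2) := by ring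
    rw [h1, div_lt_div_iff₀ (by positivity) hTpos] at hcond
    have hL2 : 0 < L ^ 2 := by positivity
    nlinarith
  -- quadratic form formula
  have key : ∀ y : N → ℝ, y ⬝ᵥ M *ᵥ y =
      a * (∑ n, y n ^ 2) + a * (∑ n, y n) ^ 2
        + b * (∑ n, ℓ n * y n) * (∑ n, y n) := by
    intro y
    have hMalt : ∀ i j, M i j * y j
        = (a + (ℓ i + ℓ j) / 2 * b) * y j + (if j = i then a * y j else 0) := by
      intro i j
      by_cases h : i = j
      · subst h; simp [hM]; ring
      · simp [hM, h, Ne.symm h]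
    have inner : ∀ i, (M *ᵥ y) i
        = a * (∑ n, y n) + ℓ i * b / 2 * (∑ n, y n)
          + b / 2 * (∑ n, ℓ n * y n) + a * y i := by
      intro i
      simp only [Matrix.mulVec, dotProduct]
      rw [Finset.sum_congr rfl fun j _ => hMalt i j, Finset.sum_add_distrib,
        Finset.sum_ite_eq' Finset.univ i (fun j => a * y j)]
      have expand : ∀ j, (a + (ℓ i + ℓ j) / 2 * b) * y j
          = a * y j + (ℓ i * b / 2) * y j + (b / 2) * (ℓ j * y j) := fun j => by ring
      rw [Finset.sum_congr rfl fun j _ => expand j, Finset.sum_add_distrib,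
        Finset.sum_add_distrib, ← Finset.mul_sum, ← Finset.mul_sum, ← Finset.mul_sum]
      simp
    simp only [dotProduct, inner]
    have expand2 : ∀ i, y i * (a * (∑ n, y n) + ℓ i * b / 2 * (∑ n, y n)
          + b / 2 * (∑ n, ℓ n * y n) + a * y i)
        = (a * (∑ n, y n)) * y i + (b / 2 * (∑ n, y n)) * (ℓ i * y i)
          + (b / 2 * (∑ n, ℓ n * y n)) * y i + a * (y i ^ 2) := fun i => by ring
    rw [Finset.sum_congr rfl fun i _ => expand2 i, Finset.sum_add_distrib,
      Finset.sum_add_distrib, Finset.sum_add_distrib, ← Finset.mul_sum,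
      ← Finset.mul_sum, ← Finset.mul_sum, ← Finset.mul_sum]
    ring
  rw [Matrix.posDef_iff_dotProduct_mulVec]
  constructor
  · -- Hermitian
    ext i j
    simp only [Matrix.conjTranspose_apply, star_trivial, hM]
    by_cases h : i = j
    · simp [h]
    · rw [if_neg (Ne.symm h), if_neg h]; ring
  · intro x hx
    have hstar : star x = x := by
      funext i; simp
    rw [hstar, key x]
    set S := ∑ n, x n with hS
    set Q := ∑ n, x n ^ 2 with hQ
    set P := ∑ n, ℓ n * x n with hP
    have hQpos : 0 < Q := by
      rcases Function.ne_iff.mp hx with ⟨n, hn⟩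
      have hn' : x n ≠ 0 := hn
      calc 0 < x n ^ 2 := pow_two_pos_of_ne_zero hn'
        _ ≤ Q := Finset.single_le_sum (fun m _ => sq_nonneg (x m)) (Finset.mem_univ n)
    -- Cauchy–Schwarz: P² ≤ T Q
    have hCS : P ^ 2 ≤ T * Q := by
      calc P ^ 2 ≤ (∑ n, ℓ n ^ 2) * ∑ n, x n ^ 2 :=
            Finset.sum_mul_sq_le_sq_mul_sq Finset.univ ℓ x
        _ = T * Q := rfl
    rcases eq_or_ne S 0 with h | h
    · rw [h]
      simp
      positivity
    · have hS2 : 0 < S ^ 2 := by positivity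
      have hXpos : 0 < a * Q + a * S ^ 2 :=
        add_pos (mul_pos hc' hQpos) (mul_pos hc' hS2)
      have h1 : b ^ 2 * P ^ 2 ≤ b ^ 2 * (T * Q) :=
        mul_le_mul_of_nonneg_left hCS (sq_nonneg b)
      have h2 : b ^ 2 * T * (Q * S ^ 2) < 4 * a ^ 2 * (Q * S ^ 2) :=
        mul_lt_mul_of_pos_right hkey (mul_pos hQpos hS2)
      have h3 : (b * P * S) ^ 2 < (a * Q + a * S ^ 2) ^ 2 := by
        nlinarith [sq_nonneg (a * Q - a * S ^ 2),
          mul_le_mul_of_nonneg_right h1 (le_of_lt hS2)]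
      nlinarith [h3, hXpos]
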